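/- Let a, k ∈ ℕ and let s^1,…,s^a, t^1,…,t^a ∈ {0,1}^k. For distinct integers l_1,…,l_b ∈ [k] with b ∈ [a] and u ∈ {0,1}^k, define f(l_1,…,l_b; u) = ∑_{i=1}^b ∑_{m=1}^{l_i} u_m. Suppose that for every choice of b ∈ [a] and distinct l_1,…,l_b ∈ [k], the multisets {f(l_1,…,l_b; s^j) : j ∈ [a]} and {f(l_1,…,l_b; t^j) : j ∈ [a]} are equal. Then there exists a permutation σ of [a] such that s^i = t^{σ(i)} for all i ∈ [a]. -/

import Mathlib

open Finset

private lemma psum_polar (x : ℕ → ℚ) (L : Finset ℕ) :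
    ∀ (j : ℕ), j ≤ L.card →
      ∑ T ∈ L.powerset, (-1 : ℚ) ^ (L.card - T.card) * (∑ l ∈ T, x l) ^ j
        = if j = L.card then  (L.card.factorial : ℚ) * ∏ l ∈ L, x l else 0 := by
  classical
  induction L using Finset.induction_on with
  | empty =>
      intro j hj
      simp only [Finset.card_empty, Nat.le_zero] at hj
      subst hj
      simp
  | @insert a L ha ih =>
      intro j hj
      have hcard : (insert a L).card = L.card + 1 := Finset.card_insert_of_notMem ha
      rw [Finset.sum_powerset_insert ha]
      have hTcard : ∀ T ∈ L.powerset, T.card ≤ L.card := fun T hT =>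
        Finset.card_le_card (Finset.mem_powerset.1 hT)
      have key : ∀ T ∈ L.powerset,
          (-1 : ℚ) ^ ((insert a L).card - T.card) * (∑ l ∈ T, x l) ^ j
            + (-1 : ℚ) ^ ((insert a L).card - (insert a T).card) * (∑ l ∈ insert a T, x l) ^ j
          = ∑ i ∈ Finset.range j, (-1 : ℚ) ^ (L.card - T.card) *
              ((x a) ^ (i + 1) * (∑ l ∈ T, x l) ^ (j - (i + 1)) * (j.choose (i + 1) : ℚ)) := by
        intro T hT
        have haT : a ∉ T := fun h => ha (Finset.mem_powerset.1 hT h)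
        have h1 : (insert a T).card = T.card + 1 := Finset.card_insert_of_notMem haT
        have h2 : (insert a L).card - (insert a T).card = L.card - T.card := by
          rw [hcard, h1]; omega
        have h3 : (insert a L).card - T.card = (L.card - T.card) + 1 := by
          rw [hcard]; have := hTcard T hT; omega
        rw [h2, h3, Finset.sum_insert haT]
        have hbin : (x a + ∑ l ∈ T, x l) ^ j
            = ∑ i ∈ Finset.range (j + 1), (x a) ^ i * (∑ l ∈ T, x l) ^ (j - i) * (j.choose i : ℚ) :=
          add_pow _ _ _
        rw [hbin, Finset.sum_range_succ']
        simp only [pow_zero, one_mul, Nat.choose_zero_right, Nat.cast_one, mul_one, Nat.sub_zero,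
          pow_succ]
        rw [mul_add, Finset.mul_sum]
        ring
      rw [← Finset.sum_add_distrib, Finset.sum_congr rfl key, Finset.sum_comm]
      have inner : ∀ i ∈ Finset.range j,
          ∑ T ∈ L.powerset, (-1 : ℚ) ^ (L.card - T.card) *
              ((x a) ^ (i + 1) * (∑ l ∈ T, x l) ^ (j - (i + 1)) * (j.choose (i + 1) : ℚ))
            = ((x a) ^ (i + 1) * (j.choose (i + 1) : ℚ)) *
              (if j - (i + 1) = L.card then  (L.card.factorial : ℚ) * ∏ l ∈ L, x l else 0) := by
        intro i hi
        rw [← ih (j - (i + 1)) (by omega), Finset.mul_sum]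
        exact Finset.sum_congr rfl fun T hT => by ring
      rw [Finset.sum_congr rfl inner]
      rw [hcard] at hj ⊢
      by_cases hjeq : j = L.card + 1
      · rw [if_pos hjeq]
        have h0mem : (0 : ℕ) ∈ Finset.range j := by
          rw [Finset.mem_range]; omega
        rw [Finset.sum_eq_single_of_mem 0 h0mem (fun i hi hi0 => by
          rw [Finset.mem_range] at hi
          rw [if_neg (by omega), mul_zero])]
        rw [if_pos (by omega)]
        rw [Finset.prod_insert ha, hjeq]
        rw [Nat.factorial_succ]
        push_cast [Nat.choose_one_right]
        ring
      · rw [if_neg hjeq]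
        exact Finset.sum_eq_zero fun i hi => by
          rw [Finset.mem_range] at hi
          rw [if_neg (by omega), mul_zero]

section Main

variable {a k : ℕ}

private def PSum14 (u : ℕ → ℕ) (l : ℕ) : ℚ := ∑ m ∈ Finset.range l, (u m : ℚ)

private def Good (r r' : Fin a → ℕ → ℕ) (φ : (ℕ → ℕ) → ℚ) : Prop :=
  ∑ i : Fin a, φ (r i) = ∑ i : Fin a, φ (r' i)

variable {r r' : Fin a → ℕ → ℕ}

private lemma Good.sum {Fs : Finset (Finset ℕ)} {F : Finset ℕ → (ℕ → ℕ) → ℚ}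
    (hF : ∀ T ∈ Fs, Good r r' (F T)) : Good r r' (fun u => ∑ T ∈ Fs, F T u) := by
  unfold Good at *
  calc ∑ i : Fin a, ∑ T ∈ Fs, F T (r i)
      = ∑ T ∈ Fs, ∑ i : Fin a, F T (r i) := Finset.sum_comm
    _ = ∑ T ∈ Fs, ∑ i : Fin a, F T (r' i) := Finset.sum_congr rfl fun T hT => hF T hT
    _ = ∑ i : Fin a, ∑ T ∈ Fs, F T (r' i) := Finset.sum_comm

private lemma Good.mul_const {c : ℚ} {φ : (ℕ → ℕ) → ℚ} (hφ : Good r r' φ) :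
    Good r r' (fun u => c * φ u) := by
  unfold Good at *
  rw [← Finset.mul_sum, ← Finset.mul_sum, hφ]

private lemma Good.congr (hrb : ∀ i m, r i m ≤ 1) (hr'b : ∀ i m, r' i m ≤ 1)
    {φ ψ : (ℕ → ℕ) → ℚ} (hpt : ∀ u : ℕ → ℕ, (∀ m, u m ≤ 1) → φ u = ψ u)
    (hφ : Good r r' φ) : Good r r' ψ := by
  unfold Good at *
  rw [Finset.sum_congr rfl fun i _ => (hpt (r i) (hrb i)).symm,
    Finset.sum_congr rfl fun i _ => (hpt (r' i) (hr'b i)).symm]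
  exact hφ

private lemma Good.lin {φ1 φ2 φ3 φ4 : (ℕ → ℕ) → ℚ}
    (h1 : Good r r' φ1) (h2 : Good r r' φ2) (h3 : Good r r' φ3) (h4 : Good r r' φ4) :
    Good r r' (fun u => 2 * φ1 u - φ2 u + φ3 u - φ4 u) := by
  unfold Good at *
  simp only [Finset.sum_sub_distrib, Finset.sum_add_distrib, ← Finset.mul_sum]
  rw [h1, h2, h3, h4]

end Main

section Main2

variable {a k : ℕ} {r r' : Fin a → ℕ → ℕ}

private lemma good_prod
    (hpow : ∀ T : Finset ℕ, T ⊆ Finset.Icc 1 k → T.card ≤ a →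
      ∀ p : ℕ, Good r r' (fun u => (∑ l ∈ T, PSum14 u l) ^ p)) :
    ∀ L : Finset ℕ, L ⊆ Finset.Icc 1 k → L.card ≤ a →
      Good r r' (fun u => ∏ l ∈ L, PSum14 u l) := by
  intro L hL hLa
  have hGsum : Good r r' (fun u =>
      ∑ T ∈ L.powerset, (-1:ℚ) ^ (L.card - T.card) * (∑ l ∈ T, PSum14 u l) ^ L.card) := by
    apply Good.sum
    intro T hT
    exact Good.mul_const (hpow T ((Finset.mem_powerset.1 hT).trans hL)
      (le_trans (Finset.card_le_card (Finset.mem_powerset.1 hT)) hLa) L.card)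
  have hpol : ∀ u : ℕ → ℕ,
      ∑ T ∈ L.powerset, (-1:ℚ) ^ (L.card - T.card) * (∑ l ∈ T, PSum14 u l) ^ L.card
        = (L.card.factorial : ℚ) * ∏ l ∈ L, PSum14 u l := by
    intro u
    rw [psum_polar (fun l => PSum14 u l) L L.card le_rfl, if_pos rfl]
  have hGfac : Good r r' (fun u => (L.card.factorial : ℚ) * ∏ l ∈ L, PSum14 u l) := by
    unfold Good at hGsum ⊢
    rw [Finset.sum_congr rfl fun i _ => (hpol (r i)).symm,
      Finset.sum_congr rfl fun i _ => (hpol (r' i)).symm]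
    exact hGsum
  have hfac : ((L.card.factorial : ℚ)) ≠ 0 := Nat.cast_ne_zero.2 (Nat.factorial_ne_zero _)
  unfold Good at hGfac ⊢
  rw [← Finset.mul_sum, ← Finset.mul_sum] at hGfac
  exact mul_left_cancel₀ hfac hGfac

private lemma good_multiset
    (hrb : ∀ i m, r i m ≤ 1) (hr'b : ∀ i m, r' i m ≤ 1)
    (hprod : ∀ L : Finset ℕ, L ⊆ Finset.Icc 1 k → L.card ≤ a →
      Good r r' (fun u => ∏ l ∈ L, PSum14 u l)) :
    ∀ (n : ℕ) (M : Multiset ℕ), M.sum ≤ n → Multiset.card M ≤ a → (∀ l ∈ M, l ≤ k) →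
      Good r r' (fun u => (M.map (PSum14 u)).prod) := by
  intro n
  induction n using Nat.strong_induction_on with
  | _ n ih =>
    intro M hsum hcard hmem
    by_cases hzero : (0 : ℕ) ∈ M
    · have hpt : ∀ u : ℕ → ℕ, (M.map (PSum14 u)).prod = 0 := by
        intro u
        apply Multiset.prod_eq_zero
        refine Multiset.mem_map.2 ⟨0, hzero, ?_⟩
        simp [PSum14]
      unfold Good
      rw [Finset.sum_congr rfl fun i _ => hpt (r i),
        Finset.sum_congr rfl fun i _ => hpt (r' i)]
    · by_cases hnd : M.Nodup
      · have hLv : M.toFinset.val = M := by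
          rw [Multiset.toFinset_val, Multiset.dedup_eq_self.2 hnd]
        have hLsub : M.toFinset ⊆ Finset.Icc 1 k := by
          intro l hl
          have hlM : l ∈ M := Multiset.mem_toFinset.1 hl
          refine Finset.mem_Icc.2 ⟨?_, hmem l hlM⟩
          rcases Nat.eq_zero_or_pos l with h0 | h0
          · exact absurd (h0 ▸ hlM) hzero
          · exact h0
        have hLcard : M.toFinset.card ≤ a := by
          have : M.toFinset.card = Multiset.card M := by
            rw [Finset.card_def, hLv]
          omega
        have hG := hprod M.toFinset hLsub hLcard
        have hpt : ∀ u : ℕ → ℕ, ∏ l ∈ M.toFinset, PSum14 u l = (M.map (PSum14 u)).prod := by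
          intro u
          rw [Finset.prod_eq_multiset_prod, hLv]
        exact Good.congr hrb hr'b (fun u _ => hpt u) hG
      · obtain ⟨m, hm2⟩ : ∃ m, 2 ≤ M.count m := by
          by_contra hcon
          push_neg at hcon
          exact hnd (Multiset.nodup_iff_count_le_one.2 fun x => by have := hcon x; omega)
        have hmM : m ∈ M := by rw [← Multiset.count_pos]; omega
        have hm1 : 1 ≤ m := by
          rcases Nat.eq_zero_or_pos m with h0 | h0
          · exact absurd (h0 ▸ hmM) hzero
          · exact h0
        have hmk : m ≤ k := hmem m hmM
        have hrep : Multiset.replicate 2 m ≤ M := Multiset.le_count_iff_replicate_le.1 hm2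
        obtain ⟨R, hR⟩ := Multiset.le_iff_exists_add.1 hrep
        have hMre : M = m ::ₘ m ::ₘ R := by
          rw [hR]
          simp [Multiset.replicate_succ, Multiset.cons_add]
        have hRmem : ∀ l ∈ R, l ≤ k := fun l hl =>
          hmem l (by rw [hMre]; exact Multiset.mem_cons_of_mem (Multiset.mem_cons_of_mem hl))
        have hRcard : Multiset.card R + 2 = Multiset.card M := by
          rw [hMre]; simp
        have hRsum : m + m + R.sum = M.sum := by
          rw [hMre]; simp [Multiset.sum_cons]; ring
        have hn1 : 1 ≤ n := by omega
        have hbound : ∀ (M' : Multiset ℕ), M'.sum ≤ n - 1 → Multiset.card M' ≤ a →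
            (∀ l ∈ M', l ≤ k) → Good r r' (fun u => (M'.map (PSum14 u)).prod) :=
          fun M' h1 h2 h3 => ih (n - 1) (by omega) M' h1 h2 h3
        have hG1 : Good r r' (fun u => ((m ::ₘ (m-1) ::ₘ R).map (PSum14 u)).prod) := by
          apply hbound
          · simp only [Multiset.sum_cons]; omega
          · simp only [Multiset.card_cons]; omega
          · intro l hl
            rcases Multiset.mem_cons.1 hl with h' | h'
            · omega
            · rcases Multiset.mem_cons.1 h' with h'' | h''
              · omega
              · exact hRmem l h''
        have hG2 : Good r r' (fun u => (((m-1) ::ₘ (m-1) ::ₘ R).map (PSum14 u)).prod) := by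
          apply hbound
          · simp only [Multiset.sum_cons]; omega
          · simp only [Multiset.card_cons]; omega
          · intro l hl
            rcases Multiset.mem_cons.1 hl with h' | h'
            · omega
            · rcases Multiset.mem_cons.1 h' with h'' | h''
              · omega
              · exact hRmem l h''
        have hG3 : Good r r' (fun u => ((m ::ₘ R).map (PSum14 u)).prod) := by
          apply hbound
          · simp only [Multiset.sum_cons]; omega
          · simp only [Multiset.card_cons]; omega
          · intro l hl
            rcases Multiset.mem_cons.1 hl with h' | h'
            · omega
            · exact hRmem l h'
        have hG4 : Good r r' (fun u => (((m-1) ::ₘ R).map (PSum14 u)).prod) := by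
          apply hbound
          · simp only [Multiset.sum_cons]; omega
          · simp only [Multiset.card_cons]; omega
          · intro l hl
            rcases Multiset.mem_cons.1 hl with h' | h'
            · omega
            · exact hRmem l h'
        have hcomb := Good.lin hG1 hG2 hG3 hG4
        apply Good.congr hrb hr'b ?_ hcomb
        intro u hu
        simp only [Multiset.map_cons, Multiset.prod_cons, hMre]
        have hxy : PSum14 u m = PSum14 u (m-1) + (u (m-1) : ℚ) := by
          have hss := Finset.sum_range_succ (fun x => (u x : ℚ)) (m - 1)
          rw [show m - 1 + 1 = m from by omega] at hss
          exact hss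
        have hc : ((u (m-1) : ℚ)) * ((u (m-1) : ℚ)) = ((u (m-1) : ℚ)) := by
          rcases Nat.le_one_iff_eq_zero_or_eq_one.1 (hu (m-1)) with h' | h' <;> rw [h'] <;> norm_num
        have hx2 : PSum14 u m * PSum14 u m
            = 2 * (PSum14 u m * PSum14 u (m-1)) - PSum14 u (m-1) * PSum14 u (m-1)
              + PSum14 u m - PSum14 u (m-1) := by
          linear_combination (PSum14 u m - PSum14 u (m-1) + (u (m-1) : ℚ) - 1) * hxy + hc
        linear_combination (-(R.map (PSum14 u)).prod) * hx2

end Main2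

section Main3

variable {a k : ℕ} {r r' : Fin a → ℕ → ℕ}

private lemma good_moment
    (hrb : ∀ i m, r i m ≤ 1) (hr'b : ∀ i m, r' i m ≤ 1)
    (hms : ∀ (M : Multiset ℕ), Multiset.card M ≤ a → (∀ l ∈ M, l ≤ k) →
      Good r r' (fun u => (M.map (PSum14 u)).prod)) :
    ∀ S : Finset ℕ, S ⊆ Finset.range k → S.card ≤ a →
      Good r r' (fun u => ∏ m ∈ S, (u m : ℚ)) := by
  intro S hS hSa
  have hpt : ∀ u : ℕ → ℕ, ∏ m ∈ S, ((u m : ℚ))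
      = ∑ T ∈ S.powerset, (∏ m ∈ T, (-(PSum14 u m))) * ∏ m ∈ S \ T, PSum14 u (m + 1) := by
    intro u
    have h1 : ∀ m ∈ S, ((u m : ℚ)) = (-(PSum14 u m)) + PSum14 u (m + 1) := by
      intro m _
      unfold PSum14
      rw [Finset.sum_range_succ]
      ring
    rw [Finset.prod_congr rfl h1, Finset.prod_add]
  have hterm : ∀ T ∈ S.powerset,
      Good r r' (fun u => (∏ m ∈ T, (-(PSum14 u m))) * ∏ m ∈ S \ T, PSum14 u (m + 1)) := by
    intro T hT
    have hTsub : T ⊆ S := Finset.mem_powerset.1 hT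
    have hpt2 : ∀ u : ℕ → ℕ, ((-1:ℚ) ^ T.card) *
          ((T.val + (S \ T).val.map (· + 1)).map (PSum14 u)).prod
        = (∏ m ∈ T, (-(PSum14 u m))) * ∏ m ∈ S \ T, PSum14 u (m + 1) := by
      intro u
      rw [Multiset.map_add, Multiset.prod_add, Multiset.map_map]
      have e1 : (T.val.map (PSum14 u)).prod = ∏ m ∈ T, PSum14 u m :=
        (Finset.prod_eq_multiset_prod _ _).symm
      have e2 : ((S \ T).val.map (PSum14 u ∘ (· + 1))).prod = ∏ m ∈ S \ T, PSum14 u (m + 1) :=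
        (Finset.prod_eq_multiset_prod _ _).symm
      rw [e1, e2]
      have e3 : ∏ m ∈ T, (-(PSum14 u m)) = (-1:ℚ) ^ T.card * ∏ m ∈ T, PSum14 u m := by
        calc ∏ m ∈ T, (-(PSum14 u m)) = ∏ m ∈ T, ((-1:ℚ) * PSum14 u m) := by
              refine Finset.prod_congr rfl fun m _ => ?_
              ring
          _ = (∏ _m ∈ T, (-1:ℚ)) * ∏ m ∈ T, PSum14 u m := Finset.prod_mul_distrib
          _ = (-1:ℚ) ^ T.card * ∏ m ∈ T, PSum14 u m := by rw [Finset.prod_const]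
      rw [e3]
      ring
    have hM : Good r r' (fun u => ((T.val + (S \ T).val.map (· + 1)).map (PSum14 u)).prod) := by
      apply hms
      · simp only [Multiset.card_add, Multiset.card_map]
        have h4 := Finset.card_sdiff_add_card_eq_card hTsub
        have e : Multiset.card T.val = T.card := rfl
        have e' : Multiset.card (S \ T).val = (S \ T).card := rfl
        omega
      · intro l hl
        rcases Multiset.mem_add.1 hl with h' | h'
        · have : l ∈ S := hTsub h'
          have := Finset.mem_range.1 (hS this)
          omega
        · obtain ⟨mm, hmm, rfl⟩ := Multiset.mem_map.1 h'
          have : mm ∈ S := (Finset.mem_sdiff.1 hmm).1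
          have := Finset.mem_range.1 (hS this)
          omega
    exact Good.congr hrb hr'b (fun u _ => hpt2 u) (Good.mul_const hM)
  exact Good.congr hrb hr'b (fun u _ => (hpt u).symm) (Good.sum hterm)

end Main3

private lemma cube_lemma :
    ∀ (k d : ℕ) (A B : Multiset (ℕ → ℕ)),
      (∀ u ∈ A, ∀ m, u m ≤ 1) → (∀ u ∈ B, ∀ m, u m ≤ 1) →
      (∀ u ∈ A, ∀ m, k ≤ m → u m = 0) → (∀ u ∈ B, ∀ m, k ≤ m → u m = 0) →
      (∀ S : Finset ℕ, S ⊆ Finset.range k → S.card ≤ d →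
        (A.map fun u => ∏ m ∈ S, u m).sum = (B.map fun u => ∏ m ∈ S, u m).sum) →
      Multiset.card A + Multiset.card B < 2 ^ (d + 1) → A = B := by
  intro k
  induction k with
  | zero =>
      intro d A B _ _ hA0 hB0 hmom _
      have hcard : Multiset.card A = Multiset.card B := by
        have h := hmom ∅ (by simp) (by simp)
        simpa using h
      have hA : A = Multiset.replicate (Multiset.card A) (fun _ => 0) :=
        Multiset.eq_replicate_card.2 fun u hu => funext fun m => hA0 u hu m (Nat.zero_le m)
      have hB : B = Multiset.replicate (Multiset.card B) (fun _ => 0) :=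
        Multiset.eq_replicate_card.2 fun u hu => funext fun m => hB0 u hu m (Nat.zero_le m)
      rw [hA, hB, hcard]
  | succ K ih =>
      intro d A B hAb hBb hA0 hB0 hmom hcard
      have hcardAB : Multiset.card A = Multiset.card B := by
        have h := hmom ∅ (by simp) (by simp)
        simpa using h
      match d with
      | 0 =>
          have hA : A = 0 := by
            rw [← Multiset.card_eq_zero]; omega
          have hB : B = 0 := by
            rw [← Multiset.card_eq_zero]; omega
          rw [hA, hB]
      | Nat.succ d' =>
          classical
          set tr : (ℕ → ℕ) → (ℕ → ℕ) := fun u => Function.update u K 0 with htr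
          set A1 := A.filter (fun u => u K = 1) with hA1def
          set A0 := A.filter (fun u => ¬ u K = 1) with hA0def
          set B1 := B.filter (fun u => u K = 1) with hB1def
          set B0 := B.filter (fun u => ¬ u K = 1) with hB0def
          have hAsplit : A1 + A0 = A := Multiset.filter_add_not _ A
          have hBsplit : B1 + B0 = B := Multiset.filter_add_not _ B
          have hA0K : ∀ u ∈ A0, u K = 0 := fun u hu => by
            have h1 := Multiset.of_mem_filter hu
            have h2 := hAb u (Multiset.mem_of_mem_filter hu) K
            omega
          have hB0K : ∀ u ∈ B0, u K = 0 := fun u hu => by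
            have h1 := Multiset.of_mem_filter hu
            have h2 := hBb u (Multiset.mem_of_mem_filter hu) K
            omega
          set A1' := A1.map tr with hA1'def
          set B1' := B1.map tr with hB1'def
          -- products over S ⊆ range K ignore the update
          have htrprod : ∀ (S : Finset ℕ), S ⊆ Finset.range K → ∀ u : ℕ → ℕ,
              (∏ m ∈ S, tr u m) = ∏ m ∈ S, u m := by
            intro S hS u
            refine Finset.prod_congr rfl fun m hm => ?_
            have : m ≠ K := by
              have := Finset.mem_range.1 (hS hm); omega
            simp [htr, Function.update_of_ne this]
          -- moments of A0 + A1' equal moments of A (for S ⊆ range K)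
          have hmomA' : ∀ (S : Finset ℕ), S ⊆ Finset.range K →
              ((A0 + A1').map fun u => ∏ m ∈ S, u m).sum = (A.map fun u => ∏ m ∈ S, u m).sum := by
            intro S hS
            rw [← hAsplit, Multiset.map_add, Multiset.map_add, Multiset.sum_add, Multiset.sum_add,
              hA1'def, Multiset.map_map]
            have hco : Multiset.map ((fun u => ∏ m ∈ S, u m) ∘ tr) A1
                = Multiset.map (fun u => ∏ m ∈ S, u m) A1 :=
              Multiset.map_congr rfl fun u _ => htrprod S hS u
            rw [hco]
            exact add_comm _ _
          have hmomB' : ∀ (S : Finset ℕ), S ⊆ Finset.range K →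
              ((B0 + B1').map fun u => ∏ m ∈ S, u m).sum = (B.map fun u => ∏ m ∈ S, u m).sum := by
            intro S hS
            rw [← hBsplit, Multiset.map_add, Multiset.map_add, Multiset.sum_add, Multiset.sum_add,
              hB1'def, Multiset.map_map]
            have hco : Multiset.map ((fun u => ∏ m ∈ S, u m) ∘ tr) B1
                = Multiset.map (fun u => ∏ m ∈ S, u m) B1 :=
              Multiset.map_congr rfl fun u _ => htrprod S hS u
            rw [hco]
            exact add_comm _ _
          -- facts about membership
          have hmemA1' : ∀ u ∈ A1', (∀ m, u m ≤ 1) ∧ (∀ m, K ≤ m → u m = 0) := by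
            intro u hu
            obtain ⟨v, hv, rfl⟩ := Multiset.mem_map.1 hu
            have hvA : v ∈ A := Multiset.mem_of_mem_filter hv
            constructor
            · intro m
              by_cases hm : m = K
              · subst hm; simp [htr]
              · simpa [htr, Function.update_of_ne hm] using hAb v hvA m
            · intro m hm
              by_cases hm' : m = K
              · subst hm'; simp [htr]
              · have : K + 1 ≤ m := by omega
                simpa [htr, Function.update_of_ne hm'] using hA0 v hvA m this
          have hmemB1' : ∀ u ∈ B1', (∀ m, u m ≤ 1) ∧ (∀ m, K ≤ m → u m = 0) := by
            intro u hu
            obtain ⟨v, hv, rfl⟩ := Multiset.mem_map.1 hu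
            have hvB : v ∈ B := Multiset.mem_of_mem_filter hv
            constructor
            · intro m
              by_cases hm : m = K
              · subst hm; simp [htr]
              · simpa [htr, Function.update_of_ne hm] using hBb v hvB m
            · intro m hm
              by_cases hm' : m = K
              · subst hm'; simp [htr]
              · have : K + 1 ≤ m := by omega
                simpa [htr, Function.update_of_ne hm'] using hB0 v hvB m this
          have hmemA0 : ∀ u ∈ A0, (∀ m, u m ≤ 1) ∧ (∀ m, K ≤ m → u m = 0) := by
            intro u hu
            refine ⟨hAb u (Multiset.mem_of_mem_filter hu), fun m hm => ?_⟩
            rcases Nat.eq_or_lt_of_le hm with h | h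
            · rw [← h]; exact hA0K u hu
            · exact hA0 u (Multiset.mem_of_mem_filter hu) m h
          have hmemB0 : ∀ u ∈ B0, (∀ m, u m ≤ 1) ∧ (∀ m, K ≤ m → u m = 0) := by
            intro u hu
            refine ⟨hBb u (Multiset.mem_of_mem_filter hu), fun m hm => ?_⟩
            rcases Nat.eq_or_lt_of_le hm with h | h
            · rw [← h]; exact hB0K u hu
            · exact hB0 u (Multiset.mem_of_mem_filter hu) m h
          have hcards : Multiset.card A1 + Multiset.card A0 = Multiset.card A := by
            rw [← hAsplit]; simp
          have hcardsB : Multiset.card B1 + Multiset.card B0 = Multiset.card B := by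
            rw [← hBsplit]; simp
          have EQ1 : A0 + A1' = B0 + B1' := by
            apply ih (d' + 1) (A0 + A1') (B0 + B1')
            · intro u hu
              rcases Multiset.mem_add.1 hu with h | h
              exacts [(hmemA0 u h).1, (hmemA1' u h).1]
            · intro u hu
              rcases Multiset.mem_add.1 hu with h | h
              exacts [(hmemB0 u h).1, (hmemB1' u h).1]
            · intro u hu
              rcases Multiset.mem_add.1 hu with h | h
              exacts [(hmemA0 u h).2, (hmemA1' u h).2]
            · intro u hu
              rcases Multiset.mem_add.1 hu with h | h
              exacts [(hmemB0 u h).2, (hmemB1' u h).2]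
            · intro S hS hSd
              rw [hmomA' S hS, hmomB' S hS]
              exact hmom S (hS.trans (Finset.range_subset_range.2 (Nat.le_succ K))) hSd
            · have e1 : Multiset.card A1' = Multiset.card A1 := by simp [hA1'def]
              have e2 : Multiset.card B1' = Multiset.card B1 := by simp [hB1'def]
              simp only [Multiset.card_add, e1, e2]
              omega
          -- now show A1' = B1'
          set C := A1' ∩ B1' with hCdef
          set A'' := A1' - C with hA''def
          set B'' := B1' - C with hB''def
          have hACle : C ≤ A1' := Multiset.inter_le_left
          have hBCle : C ≤ B1' := Multiset.inter_le_right
          have hA''C : A'' + C = A1' := tsub_add_cancel_of_le hACle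
          have hB''C : B'' + C = B1' := tsub_add_cancel_of_le hBCle
          have disj : ∀ x, Multiset.count x A'' = 0 ∨ Multiset.count x B'' = 0 := by
            intro x
            simp only [hA''def, hB''def, hCdef, Multiset.count_sub, Multiset.count_inter]
            omega
          have EQ1' : A0 + A'' = B0 + B'' := by
            have h := EQ1
            rw [← hA''C, ← hB''C] at h
            have h2 : (A0 + A'') + C = (B0 + B'') + C := by
              rw [add_assoc, add_assoc]; exact h
            exact add_right_cancel h2
          have hA''sub : A'' ≤ A1' := tsub_le_self
          have hB''sub : B'' ≤ B1' := tsub_le_self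
          have hA''B0 : Multiset.card A'' ≤ Multiset.card B0 := by
            have hle : A'' ≤ B0 := by
              rw [Multiset.le_iff_count]
              intro x
              have h := congrArg (Multiset.count x) EQ1'
              simp only [Multiset.count_add] at h
              rcases disj x with h0 | h0 <;> omega
            exact Multiset.card_le_card hle
          have hB''A0 : Multiset.card B'' ≤ Multiset.card A0 := by
            have hle : B'' ≤ A0 := by
              rw [Multiset.le_iff_count]
              intro x
              have h := congrArg (Multiset.count x) EQ1'
              simp only [Multiset.count_add] at h
              rcases disj x with h0 | h0 <;> omega
            exact Multiset.card_le_card hle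
          have hA''B'' : A'' = B'' := by
            apply ih d' A'' B''
            · exact fun u hu => (hmemA1' u (Multiset.mem_of_le hA''sub hu)).1
            · exact fun u hu => (hmemB1' u (Multiset.mem_of_le hB''sub hu)).1
            · exact fun u hu => (hmemA1' u (Multiset.mem_of_le hA''sub hu)).2
            · exact fun u hu => (hmemB1' u (Multiset.mem_of_le hB''sub hu)).2
            · intro S hS hSd
              -- moments of A1 and B1 coincide for S ∪ {K}
              have hKS : K ∉ S := fun h => by
                have := Finset.mem_range.1 (hS h); omega
              have hS' : insert K S ⊆ Finset.range (K + 1) := by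
                intro m hm
                rcases Finset.mem_insert.1 hm with h | h
                · rw [h]; exact Finset.mem_range.2 (Nat.lt_succ_self K)
                · exact Finset.mem_range.2 (Nat.lt_succ_of_lt (Finset.mem_range.1 (hS h)))
              have hS'card : (insert K S).card ≤ d' + 1 := by
                rw [Finset.card_insert_of_notMem hKS]; omega
              have hsplitA : (A.map fun u => ∏ m ∈ insert K S, u m).sum
                  = (A1.map fun u => ∏ m ∈ S, u m).sum := by
                rw [← hAsplit, Multiset.map_add, Multiset.sum_add]
                have hz : (A0.map fun u => ∏ m ∈ insert K S, u m).sum = 0 := by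
                  apply Multiset.sum_eq_zero
                  intro x hx
                  obtain ⟨u, hu, rfl⟩ := Multiset.mem_map.1 hx
                  rw [Finset.prod_insert hKS, hA0K u hu, zero_mul]
                have ho : (A1.map fun u => ∏ m ∈ insert K S, u m)
                    = (A1.map fun u => ∏ m ∈ S, u m) := by
                  apply Multiset.map_congr rfl
                  intro u hu
                  rw [Finset.prod_insert hKS, Multiset.of_mem_filter hu, one_mul]
                rw [hz, ho, add_zero]
              have hsplitB : (B.map fun u => ∏ m ∈ insert K S, u m).sum
                  = (B1.map fun u => ∏ m ∈ S, u m).sum := by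
                rw [← hBsplit, Multiset.map_add, Multiset.sum_add]
                have hz : (B0.map fun u => ∏ m ∈ insert K S, u m).sum = 0 := by
                  apply Multiset.sum_eq_zero
                  intro x hx
                  obtain ⟨u, hu, rfl⟩ := Multiset.mem_map.1 hx
                  rw [Finset.prod_insert hKS, hB0K u hu, zero_mul]
                have ho : (B1.map fun u => ∏ m ∈ insert K S, u m)
                    = (B1.map fun u => ∏ m ∈ S, u m) := by
                  apply Multiset.map_congr rfl
                  intro u hu
                  rw [Finset.prod_insert hKS, Multiset.of_mem_filter hu, one_mul]
                rw [hz, ho, add_zero]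
              have h1 : (A1.map fun u => ∏ m ∈ S, u m).sum
                  = (B1.map fun u => ∏ m ∈ S, u m).sum := by
                rw [← hsplitA, ← hsplitB]
                exact hmom (insert K S) hS' hS'card
              have hA1A1' : (A1'.map fun u => ∏ m ∈ S, u m).sum
                  = (A1.map fun u => ∏ m ∈ S, u m).sum := by
                rw [hA1'def, Multiset.map_map]
                have hco : Multiset.map ((fun u => ∏ m ∈ S, u m) ∘ tr) A1
                    = Multiset.map (fun u => ∏ m ∈ S, u m) A1 :=
                  Multiset.map_congr rfl fun u _ => htrprod S hS u
                rw [hco]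
              have hB1B1' : (B1'.map fun u => ∏ m ∈ S, u m).sum
                  = (B1.map fun u => ∏ m ∈ S, u m).sum := by
                rw [hB1'def, Multiset.map_map]
                have hco : Multiset.map ((fun u => ∏ m ∈ S, u m) ∘ tr) B1
                    = Multiset.map (fun u => ∏ m ∈ S, u m) B1 :=
                  Multiset.map_congr rfl fun u _ => htrprod S hS u
                rw [hco]
              have hsubA : (A''.map fun u => ∏ m ∈ S, u m).sum
                  + (C.map fun u => ∏ m ∈ S, u m).sum = (A1'.map fun u => ∏ m ∈ S, u m).sum := by
                rw [← hA''C, Multiset.map_add, Multiset.sum_add]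
              have hsubB : (B''.map fun u => ∏ m ∈ S, u m).sum
                  + (C.map fun u => ∏ m ∈ S, u m).sum = (B1'.map fun u => ∏ m ∈ S, u m).sum := by
                rw [← hB''C, Multiset.map_add, Multiset.sum_add]
              have hfin : (A''.map fun u => ∏ m ∈ S, u m).sum
                  + (C.map fun u => ∏ m ∈ S, u m).sum
                  = (B''.map fun u => ∏ m ∈ S, u m).sum
                  + (C.map fun u => ∏ m ∈ S, u m).sum := by
                rw [hsubA, hsubB, hA1A1', hB1B1', h1]
              exact Nat.add_right_cancel hfin
            · have hpow : 2 ^ (d' + 1 + 1) = 2 * 2 ^ (d' + 1) := by ring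
              have c1 : Multiset.card A'' ≤ Multiset.card A1' := Multiset.card_le_card hA''sub
              have c2 : Multiset.card B'' ≤ Multiset.card B1' := Multiset.card_le_card hB''sub
              have e1 : Multiset.card A1' = Multiset.card A1 := by simp [hA1'def]
              have e2 : Multiset.card B1' = Multiset.card B1 := by simp [hB1'def]
              rw [hpow] at hcard
              omega
          have hA''0 : A'' = 0 := by
            apply Multiset.eq_zero_of_forall_notMem
            intro x hx
            have hpos := Multiset.count_pos.2 hx
            have h := congrArg (Multiset.count x) hA''B''
            rcases disj x with h0 | h0 <;> omega
          have hB''0 : B'' = 0 := by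
            rw [← hA''B'']; exact hA''0
          have hA1'B1' : A1' = B1' := by
            rw [← hA''C, ← hB''C, hA''0, hB''0]
          have hA0B0 : A0 = B0 := by
            have h := EQ1'
            rw [hA''0, hB''0, add_zero, add_zero] at h
            exact h
          -- reconstruct A1 = B1
          have hrec : ∀ (M : Multiset (ℕ → ℕ)), (∀ u ∈ M, u K = 1) →
              (M.map tr).map (fun u => Function.update u K 1) = M := by
            intro M hM
            rw [Multiset.map_map]
            have hco : M.map ((fun u => Function.update u K 1) ∘ tr) = M.map id := by
              apply Multiset.map_congr rfl
              intro u hu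
              funext m
              by_cases hm : m = K
              · subst hm
                simp [htr, hM u hu]
              · simp [htr, Function.update_of_ne hm]
            rw [hco, Multiset.map_id]
          have hA1K : ∀ u ∈ A1, u K = 1 := by
            intro u hu
            rw [hA1def] at hu
            exact (Multiset.mem_filter.1 hu).2
          have hB1K : ∀ u ∈ B1, u K = 1 := by
            intro u hu
            rw [hB1def] at hu
            exact (Multiset.mem_filter.1 hu).2
          have hA1B1 : A1 = B1 := by
            have h1 : A1 = A1'.map (fun u => Function.update u K 1) := by
              rw [hA1'def, hrec A1 hA1K]
            have h2 : B1 = B1'.map (fun u => Function.update u K 1) := by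
              rw [hB1'def, hrec B1 hB1K]
            rw [h1, h2, hA1'B1']
          rw [← hAsplit, ← hBsplit, hA1B1, hA0B0]

private lemma sum_two_pow_lt (k : ℕ) : ∑ m ∈ Finset.range k, 2 ^ m < 2 ^ k := by
  induction k with
  | zero => simp
  | succ n ih =>
      rw [Finset.sum_range_succ, pow_succ]
      omega

private lemma encode_inj (k : ℕ) (u v : ℕ → ℕ) (hu : ∀ m, u m ≤ 1) (hv : ∀ m, v m ≤ 1)
    (h : ∑ m ∈ Finset.range k, u m * 2 ^ m = ∑ m ∈ Finset.range k, v m * 2 ^ m) :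
    ∀ j < k, u j = v j := by
  induction k with
  | zero => intro j hj; omega
  | succ n ih =>
      rw [Finset.sum_range_succ, Finset.sum_range_succ] at h
      have hub : ∑ m ∈ Finset.range n, u m * 2 ^ m < 2 ^ n := by
        calc ∑ m ∈ Finset.range n, u m * 2 ^ m ≤ ∑ m ∈ Finset.range n, 2 ^ m := by
              apply Finset.sum_le_sum
              intro m _
              have := hu m
              nlinarith [Nat.pow_pos (n := m) (by norm_num : (0:ℕ) < 2)]
          _ < 2 ^ n := sum_two_pow_lt n
      have hvb : ∑ m ∈ Finset.range n, v m * 2 ^ m < 2 ^ n := by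
        calc ∑ m ∈ Finset.range n, v m * 2 ^ m ≤ ∑ m ∈ Finset.range n, 2 ^ m := by
              apply Finset.sum_le_sum
              intro m _
              have := hv m
              nlinarith [Nat.pow_pos (n := m) (by norm_num : (0:ℕ) < 2)]
          _ < 2 ^ n := sum_two_pow_lt n
      have hun := hu n
      have hvn := hv n
      have htop : u n = v n ∧ ∑ m ∈ Finset.range n, u m * 2 ^ m
          = ∑ m ∈ Finset.range n, v m * 2 ^ m := by
        rcases Nat.le_one_iff_eq_zero_or_eq_one.1 hun with h1 | h1 <;>
          rcases Nat.le_one_iff_eq_zero_or_eq_one.1 hvn with h2 | h2 <;>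
          rw [h1, h2] at h <;> simp only [one_mul, zero_mul, add_zero] at h
        · exact ⟨by rw [h1, h2], h⟩
        · exfalso; omega
        · exfalso; omega
        · exact ⟨by rw [h1, h2], by omega⟩
      intro j hj
      rcases Nat.lt_succ_iff_lt_or_eq.1 hj with h' | h'
      · exact ih htop.2 j h'
      · rw [h']; exact htop.1

private lemma exists_perm_of_map_eq {n : ℕ} (f g : Fin n → ℕ)
    (hfg : Multiset.map f Finset.univ.val = Multiset.map g Finset.univ.val) :
    ∃ σ : Equiv.Perm (Fin n), ∀ i, f i = g (σ i) := by
  classical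
  set σf := Tuple.sort f with hσf
  set σg := Tuple.sort g with hσg
  have hmono_f : Monotone (f ∘ σf) := Tuple.monotone_sort f
  have hmono_g : Monotone (g ∘ σg) := Tuple.monotone_sort g
  have hmapinv : ∀ (h : Fin n → ℕ) (σ : Equiv.Perm (Fin n)),
      Multiset.map (h ∘ σ) Finset.univ.val = Multiset.map h Finset.univ.val := by
    intro h σ
    have : Multiset.map (⇑σ) Finset.univ.val = Finset.univ.val := by
      have := Finset.map_univ_equiv (σ : Fin n ≃ Fin n)
      calc Multiset.map (⇑σ) Finset.univ.val
          = (Finset.univ.map (σ : Fin n ≃ Fin n).toEmbedding).val := rfl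
        _ = Finset.univ.val := by rw [this]
    calc Multiset.map (h ∘ σ) Finset.univ.val
        = Multiset.map h (Multiset.map (⇑σ) Finset.univ.val) := by
          rw [Multiset.map_map]
      _ = Multiset.map h Finset.univ.val := by rw [this]
  have hperm : (List.ofFn (f ∘ σf)).Perm (List.ofFn (g ∘ σg)) := by
    rw [← Multiset.coe_eq_coe]
    have e1 : ((List.ofFn (f ∘ σf) : List ℕ) : Multiset ℕ)
        = Multiset.map (f ∘ σf) Finset.univ.val := (Fin.univ_val_map _).symm
    have e2 : ((List.ofFn (g ∘ σg) : List ℕ) : Multiset ℕ)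
        = Multiset.map (g ∘ σg) Finset.univ.val := (Fin.univ_val_map _).symm
    rw [e1, e2, hmapinv f σf, hmapinv g σg, hfg]
  have hsorted_f : (List.ofFn (f ∘ σf)).Pairwise (· ≤ ·) :=
    List.pairwise_ofFn.2 fun i j hij => hmono_f hij.le
  have hsorted_g : (List.ofFn (g ∘ σg)).Pairwise (· ≤ ·) :=
    List.pairwise_ofFn.2 fun i j hij => hmono_g hij.le
  have heq : List.ofFn (f ∘ σf) = List.ofFn (g ∘ σg) :=
    List.Perm.eq_of_pairwise (fun _ _ _ _ h1 h2 => le_antisymm h1 h2) hsorted_f hsorted_g hperm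
  have hfun : f ∘ σf = g ∘ σg := List.ofFn_injective heq
  refine ⟨σf.symm.trans σg, fun i => ?_⟩
  have : f (σf (σf.symm i)) = g (σg (σf.symm i)) := congrFun hfun (σf.symm i)
  simpa using this



/-- binary sequences `s^1,…,s^a, t^1,…,t^a ∈ {0,1}^k`.  If for every `b ∈ [a]`
and all distinct `l_1,…,l_b ∈ [k]` (encoded as a finset `L ⊆ [k]` with `1 ≤ |L| ≤ a`) the
multisets of values `f(l_1,…,l_b; s^j) = ∑_{i} ∑_{m=1}^{l_i} s^j_m` for the `s`-sequences and
for the `t`-sequences agree, then the `t`-sequences are a permutation of the `s`-sequences. -/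
theorem stmt14 (a k : ℕ) (ha : 1 ≤ a) (hk : 1 ≤ k)
    (s t : Fin a → ℕ → ℕ)
    (hs : ∀ i j, j < k → s i j ≤ 1) (ht : ∀ i j, j < k → t i j ≤ 1)
    (h : ∀ L : Finset ℕ, L ⊆ Finset.Icc 1 k → 1 ≤ L.card → L.card ≤ a →
      Multiset.map (fun i : Fin a => ∑ li ∈ L, ∑ m ∈ Finset.range li, s i m)
          Finset.univ.val =
        Multiset.map (fun i : Fin a => ∑ li ∈ L, ∑ m ∈ Finset.range li, t i m)
          Finset.univ.val) :
    ∃ σ : Equiv.Perm (Fin a), ∀ i, ∀ j < k, s i j = t (σ i) j := by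
  classical
  set r : Fin a → ℕ → ℕ := fun i m => if m < k then s i m else 0 with hrdef
  set r' : Fin a → ℕ → ℕ := fun i m => if m < k then t i m else 0 with hr'def
  have hrb : ∀ i m, r i m ≤ 1 := by
    intro i m
    by_cases hm : m < k
    · simpa [hrdef, hm] using hs i m hm
    · simp [hrdef, hm]
  have hr'b : ∀ i m, r' i m ≤ 1 := by
    intro i m
    by_cases hm : m < k
    · simpa [hr'def, hm] using ht i m hm
    · simp [hr'def, hm]
  have hr0 : ∀ i m, k ≤ m → r i m = 0 := by
    intro i m hm
    simp [hrdef, Nat.not_lt.2 hm]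
  have hr'0 : ∀ i m, k ≤ m → r' i m = 0 := by
    intro i m hm
    simp [hr'def, Nat.not_lt.2 hm]
  -- Step 1: power sums of subset prefix-sums
  have hpow : ∀ T : Finset ℕ, T ⊆ Finset.Icc 1 k → T.card ≤ a →
      ∀ p : ℕ, Good r r' (fun u => (∑ l ∈ T, PSum14 u l) ^ p) := by
    intro T hT hTa p
    rcases Finset.eq_empty_or_nonempty T with rfl | hne
    · unfold Good
      rfl
    · have hcard1 : 1 ≤ T.card := Finset.card_pos.2 hne
      have hmap := congrArg (Multiset.map (fun n : ℕ => ((n : ℚ)) ^ p)) (h T hT hcard1 hTa)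
      rw [Multiset.map_map, Multiset.map_map] at hmap
      have hsum := congrArg Multiset.sum hmap
      have key : ∑ i : Fin a, (((∑ li ∈ T, ∑ m ∈ Finset.range li, s i m : ℕ)) : ℚ) ^ p
          = ∑ i : Fin a, (((∑ li ∈ T, ∑ m ∈ Finset.range li, t i m : ℕ)) : ℚ) ^ p := by
        rw [Finset.sum_eq_multiset_sum, Finset.sum_eq_multiset_sum]
        exact hsum
      have hri : ∀ (w : Fin a → ℕ → ℕ) (v : Fin a → ℕ → ℕ), (∀ i m, m < k → w i m = v i m) →
          ∀ i : Fin a, ∑ l ∈ T, PSum14 (w i) l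
            = ((∑ li ∈ T, ∑ m ∈ Finset.range li, v i m : ℕ) : ℚ) := by
        intro w v hwv i
        push_cast
        refine Finset.sum_congr rfl fun l hl => ?_
        unfold PSum14
        refine Finset.sum_congr rfl fun m hm => ?_
        have hlk : l ≤ k := (Finset.mem_Icc.1 (hT hl)).2
        have hmk : m < k := lt_of_lt_of_le (Finset.mem_range.1 hm) hlk
        rw [hwv i m hmk]
      have hriS : ∀ i : Fin a, ∑ l ∈ T, PSum14 (r i) l
          = ((∑ li ∈ T, ∑ m ∈ Finset.range li, s i m : ℕ) : ℚ) :=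
        hri r s (fun i m hm => by simp [hrdef, hm])
      have hriT : ∀ i : Fin a, ∑ l ∈ T, PSum14 (r' i) l
          = ((∑ li ∈ T, ∑ m ∈ Finset.range li, t i m : ℕ) : ℚ) :=
        hri r' t (fun i m hm => by simp [hr'def, hm])
      unfold Good
      rw [Finset.sum_congr rfl fun i _ => congrArg (· ^ p) (hriS i),
        Finset.sum_congr rfl fun i _ => congrArg (· ^ p) (hriT i)]
      exact key
  -- Steps 2-4
  have hprod := good_prod hpow
  have hms : ∀ (M : Multiset ℕ), Multiset.card M ≤ a → (∀ l ∈ M, l ≤ k) →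
      Good r r' (fun u => (M.map (PSum14 u)).prod) :=
    fun M h1 h2 => good_multiset hrb hr'b hprod M.sum M le_rfl h1 h2
  have hmom := good_moment hrb hr'b hms
  -- Step 5: natural number moments
  have momN : ∀ S : Finset ℕ, S ⊆ Finset.range k → S.card ≤ a →
      ∑ i : Fin a, ∏ m ∈ S, r i m = ∑ i : Fin a, ∏ m ∈ S, r' i m := by
    intro S hS hSa
    have hQ := hmom S hS hSa
    unfold Good at hQ
    beta_reduce at hQ
    exact_mod_cast hQ
  -- Step 6: apply the cube lemma
  have hAB : Finset.univ.val.map r = Finset.univ.val.map r' := by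
    apply cube_lemma k a
    · intro u hu
      obtain ⟨i, _, rfl⟩ := Multiset.mem_map.1 hu
      exact hrb i
    · intro u hu
      obtain ⟨i, _, rfl⟩ := Multiset.mem_map.1 hu
      exact hr'b i
    · intro u hu
      obtain ⟨i, _, rfl⟩ := Multiset.mem_map.1 hu
      exact hr0 i
    · intro u hu
      obtain ⟨i, _, rfl⟩ := Multiset.mem_map.1 hu
      exact hr'0 i
    · intro S hS hSa
      rw [Multiset.map_map, Multiset.map_map]
      have e1 : (Finset.univ.val.map ((fun u => ∏ m ∈ S, u m) ∘ r)).sum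
          = ∑ i : Fin a, ∏ m ∈ S, r i m := (Finset.sum_eq_multiset_sum _ _).symm
      have e2 : (Finset.univ.val.map ((fun u => ∏ m ∈ S, u m) ∘ r')).sum
          = ∑ i : Fin a, ∏ m ∈ S, r' i m := (Finset.sum_eq_multiset_sum _ _).symm
      rw [e1, e2]
      exact momN S hS hSa
    · have hcu : Multiset.card (Finset.univ.val.map r) = a := by
        rw [Multiset.card_map]
        simp
      have hcu' : Multiset.card (Finset.univ.val.map r') = a := by
        rw [Multiset.card_map]
        simp
      have hlt : a < 2 ^ a := Nat.lt_two_pow_self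
      have : (2:ℕ) ^ (a + 1) = 2 * 2 ^ a := by ring
      omega
  -- Step 7: extract the permutation via encoding
  have hENC := congrArg (Multiset.map (fun u : ℕ → ℕ => ∑ m ∈ Finset.range k, u m * 2 ^ m)) hAB
  rw [Multiset.map_map, Multiset.map_map] at hENC
  obtain ⟨σ, hσ⟩ := exists_perm_of_map_eq _ _ hENC
  refine ⟨σ, fun i j hj => ?_⟩
  have hinj := encode_inj k (r i) (r' (σ i)) (hrb i) (hr'b (σ i)) (hσ i) j hj
  have e1 : r i j = s i j := by simp [hrdef, hj]
  have e2 : r' (σ i) j = t (σ i) j := by simp [hr'def, hj]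
  rw [← e1, ← e2, hinj]
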